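/- In the three-stage route-fixing algorithm for the security third model, every AS whose route is fixed during the Fix-Customer-Routes (FCR) phase stabilizes, under asynchronous S*BGP convergence, to exactly the route computed by the algorithm. (Proved by induction on FCR iterations: the AS fixed at iteration 1 is a direct provider of d with a one-hop customer route, and each subsequently fixed AS's next hops were fixed at earlier iterations.) -/

import Mathlib

open scoped Classical

namespace SBGP

/-- Business relationship of a neighbor, from the point of view of a given AS. -/
inductive Rel
  | customer
  | peer
  | provider
deriving DecidableEq

/-- The three positions at which the secure-route preference step can be inserted. -/
inductive SecModel
  | first
  | second
  | third
deriving DecidableEq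

/-- An AS-level graph with business relationships on its edges. -/
structure ASGraph (V : Type*) where
  adj : V → V → Bool
  /-- `rel u v` is the relationship of `v` as seen from `u`
      (`customer` means `v` is `u`'s customer, etc.). -/
  rel : V → V → Rel
  adj_symm : ∀ u v, adj u v = adj v u
  adj_irrefl : ∀ v, adj v v = false
  rel_consistent : ∀ u v, adj u v = true →
    ((rel u v = Rel.customer ↔ rel v u = Rel.provider) ∧
     (rel u v = Rel.peer ↔ rel v u = Rel.peer))

variable {V : Type*}

def lpRank : Rel → ℕ
  | Rel.customer => 0
  | Rel.peer => 1
  | Rel.provider => 2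

/-- The relationship of the next hop of a route (`none` for trivial routes). -/
def nextRel (G : ASGraph V) : List V → Option Rel
  | a :: b :: _ => some (G.rel a b)
  | _ => none

/-- Local-preference value of a route (customer < peer < provider). -/
def lpVal (G : ASGraph V) : List V → ℕ
  | a :: b :: _ => lpRank (G.rel a b)
  | _ => 0

/-- `R` is a (nonempty) path in `G`. -/
def IsPath (G : ASGraph V) : List V → Prop
  | [] => False
  | [_] => True
  | a :: b :: rest => G.adj a b = true ∧ IsPath G (b :: rest)

/-- `R` is a simple route in `G` ending at `d`. -/
def IsRouteTo (G : ASGraph V) (R : List V) (d : V) : Prop :=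
  R.Nodup ∧ IsPath G R ∧ R.getLast? = some d

/-- The export rule (Ex) along a route `a :: b :: c :: …`: each internal AS `b`
announces its route (with next hop `c`) to `a` only if that route is a customer
route of `b`, or `a` is `b`'s customer. -/
def ExportOK (G : ASGraph V) : List V → Prop
  | a :: b :: c :: rest =>
      (G.rel b c = Rel.customer ∨ G.rel b a = Rel.customer) ∧
      ExportOK G (b :: c :: rest)
  | _ => True

/-- A route is secure iff every AS on it has deployed S*BGP and it does not
contain the attacker (the bogus route is insecure even if the attacker is in `S`). -/
def SecureRoute (S : Finset V) (m : Option V) (R : List V) : Prop :=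
  (∀ v ∈ R, v ∈ S) ∧ (∀ m', m = some m' → m' ∉ R)

/-- A legitimate route: ends at the destination `d` and avoids the attacker. -/
def LegitRoute (m : Option V) (d : V) (R : List V) : Prop :=
  R.getLast? = some d ∧ ∀ m', m = some m' → m' ∉ R

/-- Perceivable routes at `s` for destination `d` when the (optional) attacker `m`
announces the bogus path "m,d": either a genuine export-compliant route to `d`
avoiding `m`, or an export-compliant route to `m` extended by `m`'s claimed
(possibly nonexistent) edge to `d`. -/
def Perceivable (G : ASGraph V) (m : Option V) (d : V) (s : V) (R : List V) : Prop :=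
  R.head? = some s ∧
  ((IsRouteTo G R d ∧ ExportOK G R ∧ ∀ m', m = some m' → m' ∉ R) ∨
   (∃ m' R', m = some m' ∧ R = R' ++ [d] ∧ IsRouteTo G R' m' ∧ d ∉ R' ∧ ExportOK G R'))

/-- The rank of a route (smaller is better), encoding lexicographically the
ranking steps of the given security model: LP (customer > peer > provider),
SP (shorter > longer) and SecP (secure > insecure), in the order determined by
the model.  All components are `< Fintype.card V + 2`, so the encoding is
faithful on simple routes. -/
noncomputable def rankNat [Fintype V] (G : ASGraph V) (S : Finset V) (m : Option V)
    (mdl : SecModel) (R : List V) : ℕ :=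
  let B := Fintype.card V + 2
  let lp := lpVal G R
  let len := R.length
  let sec : ℕ := if SecureRoute S m R then 0 else 1
  match mdl with
  | SecModel.first => sec * B * B + lp * B + len
  | SecModel.second => lp * B * B + sec * B + len
  | SecModel.third => lp * B * B + len * B + sec

/-- `n` exports the route `R` (its currently selected route) to neighbor `s`:
always if `R` is a customer route of `n` or `n` originates `R`; otherwise only
if `s` is `n`'s customer. -/
def exportsTo (G : ASGraph V) (n s : V) : List V → Prop
  | _ :: c :: _ => G.rel n c = Rel.customer ∨ G.rel n s = Rel.customer
  | _ => True

/-- Routes available to `s` given the current selections `σ` of all ASes: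
routes exported by neighbors (with BGP loop detection), together with the
attacker's bogus announcement "m,d" to each of its neighbors. -/
def Avail (G : ASGraph V) (m : Option V) (d : V) (σ : V → List V) (s : V)
    (R : List V) : Prop :=
  (∃ n, G.adj s n = true ∧ (∀ m', m = some m' → n ≠ m') ∧ σ n ≠ [] ∧
      (σ n).head? = some n ∧ s ∉ σ n ∧ exportsTo G n s (σ n) ∧ R = s :: σ n) ∨
  (∃ m', m = some m' ∧ G.adj s m' = true ∧ s ≠ d ∧ R = [s, m', d])

/-- A stable routing state for destination `d`, secure deployment `S`,
attacker `m`, security model `mdl` and tiebreak `tb`: every AS (other than the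
destination and the attacker) selects the best available route, where ties in
rank are broken by the strict tiebreak `tb`. -/
def Stable [Fintype V] (G : ASGraph V) (tb : V → List V → ℕ) (S : Finset V)
    (m : Option V) (d : V) (mdl : SecModel) (σ : V → List V) : Prop :=
  σ d = [d] ∧
  (∀ m', m = some m' → σ m' = []) ∧
  ∀ s, s ≠ d → (∀ m', m = some m' → s ≠ m') →
    ((σ s = [] ∧ ∀ R, ¬ Avail G m d σ s R) ∨
     (Avail G m d σ s (σ s) ∧
      ∀ R, Avail G m d σ s R → R ≠ σ s →
        rankNat G S m mdl (σ s) < rankNat G S m mdl R ∨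
        (rankNat G S m mdl (σ s) = rankNat G S m mdl R ∧ tb s (σ s) < tb s R)))

/-- `s` is happy: it selects a legitimate route to `d`, avoiding the attacker. -/
def Happy (m : Option V) (d : V) (σ : V → List V) (s : V) : Prop :=
  σ s ≠ [] ∧ (σ s).getLast? = some d ∧ ∀ m', m = some m' → m' ∉ σ s

/-- The set of most-preferred perceivable routes of `s` (before the tiebreak step). -/
def BPR [Fintype V] (G : ASGraph V) (S : Finset V) (m : Option V) (d : V)
    (mdl : SecModel) (s : V) (R : List V) : Prop :=
  Perceivable G m d s R ∧
  ∀ R', Perceivable G m d s R' → rankNat G S m mdl R ≤ rankNat G S m mdl R'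

/-- The number of happy source ASes (sources other than `m` and `d`). -/
noncomputable def happyCount [Fintype V] [DecidableEq V] (m d : V)
    (σ : V → List V) : ℕ :=
  (Finset.univ.filter fun s => s ≠ m ∧ s ≠ d ∧ Happy (some m) d σ s).card

/-- The customer-provider hierarchy is acyclic. -/
def Hierarchy (G : ASGraph V) : Prop :=
  ∃ h : V → ℕ, ∀ u v, G.adj u v = true → G.rel u v = Rel.customer → h v < h u

/-- The tiebreak of every AS is deterministic (injective on routes). -/
def InjTB (tb : V → List V → ℕ) : Prop :=
  ∀ s, Function.Injective (tb s)

end SBGP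
namespace SBGP

/-- A route is consistent with the partial fixing `Fix`: whenever an AS `u`
whose route has already been fixed appears on the route, the suffix of the
route at `u` equals `u`'s fixed route. -/
def ConsistentWith {V : Type*} (Fix : V → List V → Prop) (R : List V) : Prop :=
  ∀ (A : List V) (u : V) (Q : List V), R = A ++ u :: Q →
    ∀ Q', Fix u Q' → Q' = u :: Q

/-- The set of (AS, route) pairs fixed within the first `r` iterations of the
Fix-Customer-Routes (FCR) phase of the route-fixing algorithm for the security
third model.  Stage `0` fixes the two BFS roots: the destination `d` (with the
empty route `[d]`, path length 0) and the attacker (with its bogus claimed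
route `[m, d]`, path length 1).  At each subsequent stage an AS may be fixed to
a customer route whose next hop was fixed earlier and which is best (up to the
tiebreak) among its perceivable routes consistent with the earlier fixes. -/
def FCRStage {V : Type*} [Fintype V] (G : ASGraph V) (tb : V → List V → ℕ)
    (S : Finset V) (m : Option V) (d : V) : ℕ → V → List V → Prop
  | 0, v, R => (v = d ∧ R = [d]) ∨ (∃ m', m = some m' ∧ v = m' ∧ R = [m', d])
  | r + 1, v, R =>
      FCRStage G tb S m d r v R ∨
      (Perceivable G m d v R ∧
       nextRel G R = some Rel.customer ∧
       (∃ u Q, R = v :: u :: Q ∧ FCRStage G tb S m d r u (u :: Q)) ∧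
       ConsistentWith (FCRStage G tb S m d r) R ∧
       (∀ R', Perceivable G m d v R' → ConsistentWith (FCRStage G tb S m d r) R' →
          rankNat G S m SecModel.third R ≤ rankNat G S m SecModel.third R' ∧
          (rankNat G S m SecModel.third R = rankNat G S m SecModel.third R' →
            R' ≠ R → tb v R < tb v R')))


section FCRProof

variable {V : Type*}

lemma mem_of_head?_eq {l : List V} {a : V} (h : l.head? = some a) : a ∈ l := by
  cases l with
  | nil => simp at h
  | cons b t => simp at h; simp [h]

lemma eq_singleton_of_head?_getLast? {l : List V} {a : V} (h1 : l.head? = some a)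
    (h2 : l.getLast? = some a) (h3 : l.Nodup) : l = [a] := by
  match l with
  | [] => simp at h1
  | [b] => simp_all
  | b :: c :: t =>
    obtain rfl : b = a := by simpa using h1
    rw [List.getLast?_cons_cons] at h2
    have hm : b ∈ c :: t := List.mem_of_mem_getLast? h2
    exact absurd hm (List.nodup_cons.mp h3).1

lemma routeTo_ne_nil {G : ASGraph V} {R : List V} {x : V} (h : IsRouteTo G R x) :
    R ≠ [] := by
  rintro rfl
  exact h.2.1

variable [Fintype V] [DecidableEq V] {G : ASGraph V} {tb : V → List V → ℕ}
  {S : Finset V} {m d : V} {σ : V → List V}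

lemma fcr_m (G : ASGraph V) (tb : V → List V → ℕ) (S : Finset V) (m d : V)
    (hmd : m ≠ d) : ∀ r R, FCRStage G tb S (some m) d r m R → R = [m, d] := by
  intro r
  induction r with
  | zero =>
    rintro R (⟨hvd, hR⟩ | ⟨m', hm', hv, hR⟩)
    · exact absurd hvd hmd
    · cases hm'; exact hR
  | succ r ih =>
    rintro R (hold | ⟨⟨hhead, hP⟩, -⟩)
    · exact ih R hold
    rcases hP with ⟨hroute, hex, hnm⟩ | ⟨m', R', hm', hReq, hroute, hdR, hex⟩
    · exact absurd (mem_of_head?_eq hhead) (hnm m rfl)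
    · cases hm'
      have hR'ne : R' ≠ [] := routeTo_ne_nil hroute
      have hheadR' : R'.head? = some m := by
        rw [hReq, List.head?_append_of_ne_nil _ hR'ne] at hhead; exact hhead
      have : R' = [m] := eq_singleton_of_head?_getLast? hheadR' hroute.2.2 hroute.1
      rw [hReq, this]; rfl

lemma fcr_d (G : ASGraph V) (tb : V → List V → ℕ) (S : Finset V) (m d : V)
    (hmd : m ≠ d) : ∀ r R, FCRStage G tb S (some m) d r d R → R = [d] := by
  intro r
  induction r with
  | zero =>
    rintro R (⟨-, hR⟩ | ⟨m', hm', hv, hR⟩)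
    · exact hR
    · cases hm'; exact absurd hv.symm hmd
  | succ r ih =>
    rintro R (hold | ⟨⟨hhead, hP⟩, hnext, -⟩)
    · exact ih R hold
    rcases hP with ⟨hroute, hex, hnm⟩ | ⟨m', R', hm', hReq, hroute, hdR, hex⟩
    · have : R = [d] := eq_singleton_of_head?_getLast? hhead hroute.2.2 hroute.1
      rw [this] at hnext
      exact absurd hnext (by simp [nextRel])
    · have hR'ne : R' ≠ [] := routeTo_ne_nil hroute
      have hheadR' : R'.head? = some d := by
        rw [hReq, List.head?_append_of_ne_nil _ hR'ne] at hhead; exact hhead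
      exact absurd (mem_of_head?_eq hheadR') hdR

lemma avail_ne_nil {s : V} {R : List V} (h : Avail G (some m) d σ s R) : R ≠ [] := by
  rcases h with ⟨n, -, -, -, -, -, -, hR⟩ | ⟨m', -, -, -, hR⟩ <;> simp [hR]

lemma stable_sel (hσ : Stable G tb S (some m) d SecModel.third σ)
    (s : V) (hd : s ≠ d) (hm : s ≠ m) (hne : σ s ≠ []) :
    Avail G (some m) d σ s (σ s) ∧
    ∀ R, Avail G (some m) d σ s R → R ≠ σ s →
      rankNat G S (some m) SecModel.third (σ s) < rankNat G S (some m) SecModel.third R ∨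
      (rankNat G S (some m) SecModel.third (σ s) = rankNat G S (some m) SecModel.third R ∧
        tb s (σ s) < tb s R) := by
  rcases hσ.2.2 s hd (fun m' h => by injection h with h; subst h; exact hm) with
    ⟨h1, -⟩ | h
  · exact absurd h1 hne
  · exact h

lemma stable_sel' (hσ : Stable G tb S (some m) d SecModel.third σ)
    (s : V) (hd : s ≠ d) (hm : s ≠ m) {R0 : List V}
    (h0 : Avail G (some m) d σ s R0) :
    Avail G (some m) d σ s (σ s) ∧
    ∀ R, Avail G (some m) d σ s R → R ≠ σ s →
      rankNat G S (some m) SecModel.third (σ s) < rankNat G S (some m) SecModel.third R ∨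
      (rankNat G S (some m) SecModel.third (σ s) = rankNat G S (some m) SecModel.third R ∧
        tb s (σ s) < tb s R) := by
  rcases hσ.2.2 s hd (fun m' h => by injection h with h; subst h; exact hm) with
    ⟨-, hno⟩ | h
  · exact absurd h0 (hno R0)
  · exact h

lemma perceivable_sel (hmd : m ≠ d) (hσ : Stable G tb S (some m) d SecModel.third σ) :
    ∀ s, σ s ≠ [] → Perceivable G (some m) d s (σ s) := by
  suffices h : ∀ k s, (σ s).length ≤ k → σ s ≠ [] →
      Perceivable G (some m) d s (σ s) from fun s => h (σ s).length s le_rfl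
  intro k
  induction k with
  | zero =>
    intro s hl hne
    rw [Nat.le_zero, List.length_eq_zero_iff] at hl
    exact absurd hl hne
  | succ k ih =>
    intro s hl hne
    by_cases hsd : s = d
    · subst hsd
      rw [hσ.1]
      refine ⟨rfl, Or.inl ⟨⟨List.nodup_singleton _, trivial, rfl⟩, trivial, ?_⟩⟩
      intro m' h; injection h with h; subst h; simpa using hmd
    by_cases hsm : s = m
    · subst hsm; exact absurd (hσ.2.1 _ rfl) hne
    obtain ⟨hav, -⟩ := stable_sel hσ s hsd hsm hne
    rcases hav with ⟨n, hadj, hnm, hnne, hnhead, hsn, hexp, hR⟩ | ⟨m', hm', hadj, hsd', hR⟩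
    · obtain ⟨t, ht⟩ : ∃ t, σ n = n :: t := by
        cases h : σ n with
        | nil => exact absurd h hnne
        | cons a t =>
          rw [h] at hnhead
          simp at hnhead
          exact ⟨t, by rw [hnhead]⟩
      have hlen : (σ n).length ≤ k := by
        rw [hR] at hl; simpa using hl
      obtain ⟨hheadn, hcase⟩ := ih n hlen hnne
      rw [hR]
      rcases hcase with ⟨⟨hnd, hpath, hlast⟩, hex, hnotm⟩ |
        ⟨m', R', hm', hRn, ⟨hnd', hpath', hlast'⟩, hdR', hex'⟩
      · refine ⟨rfl, Or.inl ⟨⟨List.nodup_cons.mpr ⟨hsn, hnd⟩, ?_, ?_⟩, ?_, ?_⟩⟩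
        · rw [ht]; exact ⟨hadj, ht ▸ hpath⟩
        · rw [ht, List.getLast?_cons_cons]; exact ht ▸ hlast
        · rw [ht]
          rw [ht] at hexp hex
          cases t with
          | nil => trivial
          | cons c t' => exact ⟨hexp, hex⟩
        · intro m' h; injection h with h; subst h
          intro hc
          rcases List.mem_cons.mp hc with h | h
          · exact hsm h.symm
          · exact hnotm _ rfl h
      · cases hm'
        obtain ⟨t', rfl⟩ : ∃ t', R' = n :: t' := by
          have hR'ne : R' ≠ [] := by
            cases R' with
            | nil => exact absurd hpath' (by intro h; exact h)
            | cons a t => simp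
          cases R' with
          | nil => exact absurd rfl hR'ne
          | cons a t'' =>
            rw [ht] at hRn
            simp at hRn
            exact ⟨t'', by rw [hRn.1]⟩
        have htt : t = t' ++ [d] := by
          rw [ht] at hRn; simpa using hRn
        refine ⟨rfl, Or.inr ⟨m, s :: n :: t', rfl, ?_, ⟨?_, ⟨hadj, hpath'⟩, ?_⟩, ?_, ?_⟩⟩
        · rw [ht, htt]; rfl
        · refine List.nodup_cons.mpr ⟨?_, hnd'⟩
          rw [ht, htt] at hsn
          simp only [List.mem_cons, List.mem_append, List.mem_singleton, not_or] at hsn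
          simp only [List.mem_cons, not_or]
          exact ⟨hsn.1, hsn.2.1⟩
        · rw [List.getLast?_cons_cons]; exact hlast'
        · intro hc
          rcases List.mem_cons.mp hc with h | h
          · exact hsd h.symm
          · exact hdR' h
        · rw [ht, htt] at hexp
          cases t' with
          | nil => trivial
          | cons c t3 => exact ⟨hexp, hex'⟩
    · cases hm'
      rw [hR]
      refine ⟨rfl, Or.inr ⟨m, [s, m], rfl, rfl, ⟨?_, ⟨hadj, trivial⟩, rfl⟩, ?_, trivial⟩⟩
      · simp [hsm]
      · intro hc
        rcases List.mem_cons.mp hc with h | hc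
        · exact hsd' h.symm
        · rcases List.mem_cons.mp hc with h | h
          · exact hmd h.symm
          · simp at h

lemma suffix_sel (hmd : m ≠ d) (hσ : Stable G tb S (some m) d SecModel.third σ) :
    ∀ s, σ s ≠ [] → ∀ A (u : V) Q, σ s = A ++ u :: Q →
      (u = m ∧ Q = [d]) ∨ σ u = u :: Q := by
  suffices h : ∀ k s, (σ s).length ≤ k → σ s ≠ [] → ∀ A (u : V) Q, σ s = A ++ u :: Q →
      (u = m ∧ Q = [d]) ∨ σ u = u :: Q from fun s => h (σ s).length s le_rfl
  intro k
  induction k with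
  | zero =>
    intro s hl hne
    rw [Nat.le_zero, List.length_eq_zero_iff] at hl
    exact absurd hl hne
  | succ k ih =>
    intro s hl hne A u Q hdec
    by_cases hsd : s = d
    · subst hsd
      rw [hσ.1] at hdec
      cases A with
      | nil =>
        simp only [List.nil_append] at hdec
        injection hdec with h1 h2
        subst h1; subst h2
        right; exact hσ.1
      | cons a A' =>
        simp only [List.cons_append] at hdec
        injection hdec with h1 h2
        exact absurd h2.symm (by simp)
    by_cases hsm : s = m
    · subst hsm; exact absurd (hσ.2.1 _ rfl) hne
    obtain ⟨hav, -⟩ := stable_sel hσ s hsd hsm hne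
    rcases hav with ⟨n, hadj, hnm, hnne, hnhead, hsn, hexp, hR⟩ | ⟨m', hm', hadj, hsd', hR⟩
    · rw [hR] at hdec
      cases A with
      | nil =>
        simp only [List.nil_append] at hdec
        injection hdec with h1 h2
        subst h1; subst h2
        right; exact hR
      | cons a A' =>
        simp only [List.cons_append] at hdec
        injection hdec with h1 h2
        have hlen : (σ n).length ≤ k := by rw [hR] at hl; simpa using hl
        exact ih n hlen hnne A' u Q h2
    · cases hm'
      rw [hR] at hdec
      match A, hdec with
      | [], hdec =>
        simp only [List.nil_append] at hdec
        injection hdec with h1 h2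
        subst h1; subst h2
        right; exact hR
      | [a], hdec =>
        simp only [List.cons_append, List.nil_append] at hdec
        injection hdec with h1 h2
        injection h2 with h3 h4
        exact Or.inl ⟨h3.symm, h4.symm⟩
      | [a, b], hdec =>
        simp only [List.cons_append, List.nil_append] at hdec
        injection hdec with h1 h2
        injection h2 with h3 h4
        injection h4 with h5 h6
        subst h5; subst h6
        right; exact hσ.1
      | a :: b :: c :: A', hdec =>
        simp only [List.cons_append] at hdec
        injection hdec with h1 h2
        injection h2 with h3 h4
        injection h4 with h5 h6
        exact absurd h6.symm (by simp)

lemma perceivable_adj {v u : V} {Q R : List V}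
    (hvm : v ≠ m) (hP : Perceivable G (some m) d v R) (hR : R = v :: u :: Q) :
    G.adj v u = true ∧ v ∉ u :: Q := by
  obtain ⟨hhead, hc⟩ := hP
  subst hR
  rcases hc with ⟨⟨hnd, hpath, -⟩, -, -⟩ | ⟨m', R', hm', hEq, ⟨hnd, hpath, hlast⟩, hdR, -⟩
  · exact ⟨hpath.1, (List.nodup_cons.mp hnd).1⟩
  · cases hm'
    match R', hEq with
    | [], hEq => exact absurd hpath (by intro h; exact h)
    | [a], hEq =>
      simp at hEq
      simp at hlast
      rw [hEq.1, hlast] at hvm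
      exact absurd rfl hvm
    | a :: b :: t, hEq =>
      simp at hEq
      obtain ⟨rfl, rfl, rfl⟩ := hEq
      refine ⟨hpath.1, ?_⟩
      have h1 : v ∉ u :: t := (List.nodup_cons.mp hnd).1
      have h2 : v ≠ d := fun h => hdR (h ▸ List.mem_cons_self)
      intro hc
      rcases List.mem_cons.mp hc with h | hc2
      · exact h1 (h ▸ List.mem_cons_self)
      · rcases List.mem_append.mp hc2 with h | h
        · exact h1 (List.mem_cons_of_mem _ h)
        · exact h2 (by simpa using h)

lemma perceivable_export {v u c : V} {Q R : List V}
    (hum : u ≠ m) (hP : Perceivable G (some m) d v R) (hR : R = v :: u :: c :: Q) :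
    G.rel u c = Rel.customer ∨ G.rel u v = Rel.customer := by
  obtain ⟨hhead, hc⟩ := hP
  subst hR
  rcases hc with ⟨-, hex, -⟩ | ⟨m', R', hm', hEq, ⟨hnd, hpath, hlast⟩, hdR, hex⟩
  · exact hex.1
  · cases hm'
    match R', hEq with
    | [], hEq => exact absurd hpath (by intro h; exact h)
    | [a], hEq => simp at hEq
    | [a, b], hEq =>
      simp at hEq
      simp at hlast
      rw [hEq.2.1, hlast] at hum
      exact absurd rfl hum
    | a :: b :: c2 :: t, hEq =>
      simp at hEq
      obtain ⟨rfl, rfl, rfl, -⟩ := hEq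
      exact hex.1

end FCRProof

/-- **Correctness of the FCR phase of the route-fixing algorithm (security
third model).**  Every AS whose route is fixed during the
Fix-Customer-Routes phase stabilizes, in the S*BGP routing outcome, to exactly
the route computed by the algorithm. -/
theorem FCR_correct {V : Type*} [Fintype V] [DecidableEq V]
    (G : ASGraph V) (tb : V → List V → ℕ) (hinj : InjTB tb)
    (S : Finset V) (m d : V) (hmd : m ≠ d)
    (σ : V → List V) (hσ : Stable G tb S (some m) d SecModel.third σ) :
    ∀ (r : ℕ) (v : V) (R : List V),
      FCRStage G tb S (some m) d r v R → v ≠ m → σ v = R := by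
  intro r
  induction r with
  | zero =>
    rintro v R (⟨rfl, rfl⟩ | ⟨m', hm', rfl, rfl⟩) hvm
    · exact hσ.1
    · cases hm'; exact absurd rfl hvm
  | succ r ih =>
    rintro v R h hvm
    rcases h with hold | hnew
    · exact ih v R hold hvm
    obtain ⟨hP, hnext, ⟨u, Q, hR, hfixu⟩, hcons, hbest⟩ := hnew
    have hvd : v ≠ d := by
      intro he
      have hd' : FCRStage G tb S (some m) d (r + 1) v R :=
        Or.inr ⟨hP, hnext, ⟨u, Q, hR, hfixu⟩, hcons, hbest⟩
      rw [he] at hd'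
      have := fcr_d G tb S m d hmd (r + 1) R hd'
      rw [hR] at this
      simp at this
    obtain ⟨hadj, hvnot⟩ := perceivable_adj hvm hP hR
    have havR : Avail G (some m) d σ v R := by
      by_cases hum : u = m
      · have hfixm : FCRStage G tb S (some m) d r m (m :: Q) := by
          rw [hum] at hfixu; exact hfixu
        have hQ : Q = [d] := by
          have := fcr_m G tb S m d hmd r (m :: Q) hfixm
          simpa using this
        refine Or.inr ⟨m, rfl, ?_, hvd, ?_⟩
        · rw [← hum]; exact hadj
        · rw [hR, hum, hQ]
      · have hσu : σ u = u :: Q := ih u (u :: Q) hfixu hum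
        refine Or.inl ⟨u, hadj, fun m' h => by injection h with h; subst h; exact hum,
          ?_, ?_, ?_, ?_, ?_⟩
        · rw [hσu]; simp
        · rw [hσu]; rfl
        · rw [hσu]; exact hvnot
        · rw [hσu]
          cases Q with
          | nil => trivial
          | cons c Q' => exact perceivable_export hum hP hR
        · rw [hR, hσu]
    obtain ⟨havσ, hbestσ⟩ := stable_sel' hσ v hvd hvm havR
    by_cases heq : σ v = R
    · exact heq
    have hσne : σ v ≠ [] := avail_ne_nil havσ
    have hPσ : Perceivable G (some m) d v (σ v) := perceivable_sel hmd hσ v hσne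
    have hconsσ : ConsistentWith (FCRStage G tb S (some m) d r) (σ v) := by
      intro A u' Q' hdec Q'' hfix
      rcases suffix_sel hmd hσ v hσne A u' Q' hdec with ⟨hum', hQ'⟩ | hu
      · rw [hum'] at hfix ⊢
        rw [hQ']
        exact fcr_m G tb S m d hmd r Q'' hfix
      · have hu'm : u' ≠ m := by
          intro he
          rw [he, hσ.2.1 m rfl] at hu
          simp at hu
        exact (ih u' Q'' hfix hu'm).symm.trans hu
    obtain ⟨hle, htb⟩ := hbest (σ v) hPσ hconsσ
    rcases hbestσ R havR (fun h => heq h.symm) with hlt | ⟨heqr, hlt⟩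
    · exact absurd (lt_of_lt_of_le hlt hle) (lt_irrefl _)
    · exact absurd (lt_trans hlt (htb heqr.symm heq)) (lt_irrefl _)


end SBGP
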